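/- Let X be a real random variable with distribution function 𝔽, let X₁,…,X_n be i.i.d. copies of X, let 0 < q < 1, and suppose ξ < ξ_q (the q-quantile). Set δ₂ = q − 𝔽(ξ). Then the empirical quantile ξ̂_q satisfies: (i) ℙⁿ(ξ̂_q < ξ) ≤ exp(−2nδ₂²); (ii) ℙⁿ(ξ̂_q < ξ) ≤ exp(−nδ₂²/(2𝔽(ξ) + (2/3)δ₂)); (iii) ℙⁿ(ξ̂_q < ξ) ≤ exp(−nδ₂²/(2(1 − 𝔽(ξ)))). -/

import Mathlib

open MeasureTheory Real
open scoped ENNReal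

/-- The distribution function `𝔽(ξ) = ℙ(X ≤ ξ)` of a law `μ` on `ℝ`. -/
noncomputable def distFun (μ : MeasureTheory.Measure ℝ) (ξ : ℝ) : ℝ :=
  (μ (Set.Iic ξ)).toReal

/-- The `q`-quantile `ξ_q = inf {ξ : 𝔽(ξ) ≥ q}`. -/
noncomputable def quantile (μ : MeasureTheory.Measure ℝ) (q : ℝ) : ℝ :=
  sInf {ξ : ℝ | q ≤ distFun μ ξ}

/-- The empirical distribution function of the samples `ω : Fin n → ℝ`. -/
noncomputable def empDistFun {n : ℕ} (ω : Fin n → ℝ) (ξ : ℝ) : ℝ :=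
  ((Finset.univ.filter fun i => ω i ≤ ξ).card : ℝ) / n

/-- The empirical `q`-quantile `ξ̂_q = inf {ξ : 𝔽_n(ξ) ≥ q}`. -/
noncomputable def empQuantile {n : ℕ} (ω : Fin n → ℝ) (q : ℝ) : ℝ :=
  sInf {ξ : ℝ | q ≤ empDistFun ω ξ}

lemma aux_lintegral_pow {α : Type*} [MeasurableSpace α] (μ : Measure α) [SigmaFinite μ]
    (g : α → ℝ≥0∞) (hg : Measurable g) (n : ℕ) :
    ∫⁻ ω : Fin n → α, ∏ i, g (ω i) ∂(Measure.pi fun _ => μ) = (∫⁻ x, g x ∂μ) ^ n := by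
  induction n with
  | zero => simp [Measure.pi_of_empty]
  | succ n ih =>
    have h := measurePreserving_piFinSuccAbove (fun _ : Fin (n+1) => μ) 0
    have hmeas : Measurable fun ω : Fin n → α => ∏ j, g (ω j) :=
      Finset.measurable_prod _ fun j _ => hg.comp (measurable_pi_apply j)
    have key : ∫⁻ ω : Fin (n+1) → α, ∏ i, g (ω i) ∂(Measure.pi fun _ => μ)
        = ∫⁻ z : α × (Fin n → α), g z.1 * ∏ j, g (z.2 j)
            ∂(μ.prod (Measure.pi fun _ : Fin n => μ)) := by
      rw [← h.lintegral_comp (by fun_prop)]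
      congr 1
      ext ω
      simp [MeasurableEquiv.piFinSuccAbove_apply, Fin.prod_univ_succ, Fin.succAbove, Fin.tail]
    rw [key, lintegral_prod_mul hg.aemeasurable hmeas.aemeasurable, ih, pow_succ]
    ring

-- p bounds
lemma distFun_nonneg (μ : Measure ℝ) (ξ : ℝ) : 0 ≤ distFun μ ξ := ENNReal.toReal_nonneg

lemma distFun_le_one (μ : Measure ℝ) [IsProbabilityMeasure μ] (ξ : ℝ) : distFun μ ξ ≤ 1 := by
  have h := prob_le_one (μ := μ) (s := Set.Iic ξ)
  simpa [distFun] using ENNReal.toReal_mono (by simp) h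

lemma distFun_mono (μ : Measure ℝ) [IsProbabilityMeasure μ] {a b : ℝ} (hab : a ≤ b) :
    distFun μ a ≤ distFun μ b :=
  ENNReal.toReal_mono (measure_ne_top μ _) (measure_mono (Set.Iic_subset_Iic.mpr hab))

lemma distFun_lt_of_lt_quantile (μ : Measure ℝ) [IsProbabilityMeasure μ] {q ξ : ℝ}
    (hq0 : 0 < q) (hξ : ξ < quantile μ q) : distFun μ ξ < q := by
  by_contra hc
  push_neg at hc
  -- ξ belongs to the defining set; need the set to be bounded below
  have hbdd : BddBelow {ξ' : ℝ | q ≤ distFun μ ξ'} := by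
    -- find x₀ with distFun μ x₀ < q
    obtain ⟨x₀, hx₀⟩ : ∃ x₀ : ℝ, distFun μ x₀ < q := by
      have ht : Filter.Tendsto (fun x : ℝ => (μ (Set.Ici x)).toReal) Filter.atBot
          (nhds ((μ Set.univ).toReal)) := by
        exact (ENNReal.tendsto_toReal (by simp)).comp (tendsto_measure_Ici_atBot μ)
      rw [measure_univ] at ht
      simp only [ENNReal.toReal_one] at ht
      have h1q : (1 : ℝ) - q < 1 := by linarith
      have hev := ht.eventually_const_lt h1q
      obtain ⟨y, hy⟩ := hev.exists
      refine ⟨y - 1, ?_⟩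
      have hdisj : Disjoint (Set.Iic (y - 1)) (Set.Ici y) := by
        rw [Set.disjoint_left]
        intro z hz hz'
        simp only [Set.mem_Iic, Set.mem_Ici] at hz hz'
        linarith
      have hsum : μ (Set.Iic (y - 1)) + μ (Set.Ici y) ≤ 1 := by
        rw [← measure_union hdisj measurableSet_Ici]
        simpa using prob_le_one
      have := ENNReal.toReal_mono (by simp) hsum
      rw [ENNReal.toReal_add (measure_ne_top μ _) (measure_ne_top μ _)] at this
      simp only [ENNReal.toReal_one] at this
      simp only [distFun]
      linarith
    refine ⟨x₀, fun ξ' hξ' => ?_⟩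
    by_contra hlt
    push_neg at hlt
    exact absurd (le_trans hξ' (distFun_mono μ hlt.le)) (not_le.mpr hx₀)
  have : quantile μ q ≤ ξ := csInf_le hbdd hc
  linarith

-- the inclusion into the counting event
lemma aux_event_subset {n : ℕ} (q ξ : ℝ) (hq0 : 0 < q) (hq1 : q < 1) :
    {ω : Fin n → ℝ | empQuantile ω q < ξ} ⊆
      {ω : Fin n → ℝ | q * n ≤ ((Finset.univ.filter fun i => ω i ≤ ξ).card : ℝ)} := by
  intro ω hω
  simp only [Set.mem_setOf_eq] at hω ⊢
  rcases Nat.eq_zero_or_pos n with hn | hn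
  · subst hn; simp
  · -- S nonempty and bounded below
    set S := {ξ' : ℝ | q ≤ empDistFun ω ξ'} with hS
    have hne : S.Nonempty := by
      obtain ⟨M, hM⟩ := Finset.exists_le (Finset.univ.image ω)
      refine ⟨M, ?_⟩
      simp only [hS, Set.mem_setOf_eq, empDistFun]
      have : (Finset.univ.filter fun i => ω i ≤ M) = Finset.univ := by
        ext i
        simp only [Finset.mem_filter, Finset.mem_univ, true_and, iff_true]
        exact hM (ω i) (Finset.mem_image_of_mem ω (Finset.mem_univ i))
      rw [this]
      simp only [Finset.card_univ, Fintype.card_fin]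
      rw [div_self (by positivity)]
      exact hq1.le
    have hbdd : BddBelow S := by
      have hne' : (Finset.univ : Finset (Fin n)).Nonempty := Finset.univ_nonempty_iff.mpr
        ⟨⟨0, hn⟩⟩
      obtain ⟨m, -, hm⟩ := Finset.exists_min_image Finset.univ ω hne'
      refine ⟨ω m, fun ξ' hξ' => ?_⟩
      by_contra hlt
      push_neg at hlt
      have : (Finset.univ.filter fun i => ω i ≤ ξ') = ∅ := by
        apply Finset.filter_false_of_mem
        intro i _
        push_neg
        exact lt_of_lt_of_le hlt (hm i (Finset.mem_univ i))
      simp only [hS, Set.mem_setOf_eq, empDistFun, this] at hξ'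
      simp at hξ'
      linarith
    obtain ⟨ξ', hξ'S, hξ'lt⟩ := (csInf_lt_iff hbdd hne).mp hω
    have hcard : ((Finset.univ.filter fun i => ω i ≤ ξ').card : ℝ)
        ≤ ((Finset.univ.filter fun i => ω i ≤ ξ).card : ℝ) := by
      have := Finset.card_le_card (s := Finset.univ.filter fun i => ω i ≤ ξ')
        (t := Finset.univ.filter fun i => ω i ≤ ξ) (fun i hi => by
          simp only [Finset.mem_filter] at hi ⊢; exact ⟨hi.1, le_trans hi.2 hξ'lt.le⟩)
      exact_mod_cast this
    have hmono : empDistFun ω ξ' ≤ empDistFun ω ξ := by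
      simp only [empDistFun]
      exact (div_le_div_iff_of_pos_right (Nat.cast_pos.mpr hn)).mpr hcard
    have : q ≤ empDistFun ω ξ := le_trans hξ'S hmono
    simp only [empDistFun] at this
    rw [le_div_iff₀ (by positivity)] at this
    linarith [this]

lemma aux_chernoff (μ : Measure ℝ) [IsProbabilityMeasure μ] (n : ℕ) (q ξ t : ℝ)
    (hq0 : 0 < q) (hq1 : q < 1) (ht : 0 ≤ t) :
    ((Measure.pi fun _ : Fin n => μ) {ω | empQuantile ω q < ξ}).toReal ≤
      Real.exp (-(t * n * q)) * (1 - distFun μ ξ + distFun μ ξ * Real.exp t) ^ n := by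
  classical
  set p := distFun μ ξ with hp
  have hp0 : 0 ≤ p := distFun_nonneg μ ξ
  have hp1 : p ≤ 1 := distFun_le_one μ ξ
  set ν := (Measure.pi fun _ : Fin n => μ) with hν
  haveI : IsProbabilityMeasure ν := by
    rw [hν]; infer_instance
  -- the exponential weight function
  set A : ℝ≥0∞ := ENNReal.ofReal (Real.exp t) with hA
  have hA1 : 1 ≤ A := by
    rw [hA, ← ENNReal.ofReal_one]
    exact ENNReal.ofReal_le_ofReal (Real.one_le_exp ht)
  set g : ℝ → ℝ≥0∞ := fun x => if x ≤ ξ then A else 1 with hg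
  have hgmeas : Measurable g := Measurable.ite measurableSet_Iic measurable_const
    measurable_const
  set f : (Fin n → ℝ) → ℝ≥0∞ := fun ω => ∏ i, g (ω i) with hf
  have hfmeas : Measurable f :=
    Finset.measurable_prod _ fun j _ => hgmeas.comp (measurable_pi_apply j)
  -- lower bound of f on the event
  set c : ℝ≥0∞ := ENNReal.ofReal (Real.exp (t * n * q)) with hc
  have hsub : {ω : Fin n → ℝ | empQuantile ω q < ξ} ⊆ {ω | c ≤ f ω} := by
    refine (aux_event_subset q ξ hq0 hq1).trans ?_
    intro ω hω
    simp only [Set.mem_setOf_eq] at hω ⊢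
    have hfω : f ω = A ^ (Finset.univ.filter fun i => ω i ≤ ξ).card := by
      rw [hf]
      simp only [hg]
      rw [Finset.prod_ite, Finset.prod_const, Finset.prod_const_one, mul_one]
    rw [hfω, hA, ← ENNReal.ofReal_pow (Real.exp_pos t).le, ← Real.exp_nat_mul, hc]
    apply ENNReal.ofReal_le_ofReal
    apply Real.exp_le_exp.2
    calc t * ↑n * q = t * (q * ↑n) := by ring
      _ ≤ t * ↑(Finset.univ.filter fun i => ω i ≤ ξ).card :=
          mul_le_mul_of_nonneg_left hω ht
      _ = ↑(Finset.univ.filter fun i => ω i ≤ ξ).card * t := by ring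
  -- Markov
  have hmarkov : c * ν {ω | empQuantile ω q < ξ} ≤ ∫⁻ ω, f ω ∂ν := by
    calc c * ν {ω | empQuantile ω q < ξ} ≤ c * ν {ω | c ≤ f ω} := by
          exact mul_le_mul_right (measure_mono hsub) c
      _ ≤ ∫⁻ ω, f ω ∂ν := mul_meas_ge_le_lintegral₀ hfmeas.aemeasurable c
  -- compute the integral
  have hint : ∫⁻ x, g x ∂μ = ENNReal.ofReal (1 - p + p * Real.exp t) := by
    have hgeq : g = fun x => Set.indicator (Set.Iic ξ) (fun _ => A) x
        + Set.indicator (Set.Iic ξ)ᶜ (fun _ => (1 : ℝ≥0∞)) x := by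
      funext x
      by_cases hx : x ≤ ξ
      · simp [hg, hx, Set.indicator_apply, Set.mem_Iic, Set.mem_compl_iff]
      · simp [hg, hx, Set.indicator_apply, Set.mem_Iic, Set.mem_compl_iff, not_le.mp hx]
    rw [hgeq, lintegral_add_left (measurable_const.indicator measurableSet_Iic) _]
    rw [lintegral_indicator_const measurableSet_Iic,
      lintegral_indicator_const measurableSet_Iic.compl]
    have hIic : μ (Set.Iic ξ) = ENNReal.ofReal p := by
      rw [hp, distFun, ENNReal.ofReal_toReal (measure_ne_top μ _)]
    have hcompl : μ (Set.Iic ξ)ᶜ = ENNReal.ofReal (1 - p) := by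
      rw [measure_compl measurableSet_Iic (measure_ne_top μ _), measure_univ, hIic,
        ← ENNReal.ofReal_one, ← ENNReal.ofReal_sub _ hp0]
    rw [hIic, hcompl, hA, ← ENNReal.ofReal_mul (Real.exp_pos t).le, one_mul,
      ← ENNReal.ofReal_add (by positivity) (by linarith)]
    congr 1
    ring
  have hlint : ∫⁻ ω, f ω ∂ν = ENNReal.ofReal ((1 - p + p * Real.exp t) ^ n) := by
    have hbase : (0:ℝ) ≤ 1 - p + p * Real.exp t := by nlinarith [Real.one_le_exp ht]
    rw [hν, hf, aux_lintegral_pow μ g hgmeas n, hint, ← ENNReal.ofReal_pow hbase]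
  -- divide by c
  have hfinal : ν {ω | empQuantile ω q < ξ} ≤
      ENNReal.ofReal (Real.exp (-(t * n * q)) * (1 - p + p * Real.exp t) ^ n) := by
    have hmul := mul_le_mul_right hmarkov (ENNReal.ofReal (Real.exp (-(t * n * q))))
    rw [← mul_assoc, hc, ← ENNReal.ofReal_mul (Real.exp_pos _).le, ← Real.exp_add] at hmul
    simp only [neg_add_cancel, Real.exp_zero, ENNReal.ofReal_one, one_mul] at hmul
    calc ν {ω | empQuantile ω q < ξ} ≤
          ENNReal.ofReal (Real.exp (-(t * n * q))) * ∫⁻ ω, f ω ∂ν := hmul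
      _ = ENNReal.ofReal (Real.exp (-(t * n * q)) * (1 - p + p * Real.exp t) ^ n) := by
          rw [hlint, ← ENNReal.ofReal_mul (Real.exp_pos _).le]
  have hbase : (0:ℝ) ≤ 1 - p + p * Real.exp t := by nlinarith [Real.one_le_exp ht]
  exact ENNReal.toReal_le_of_le_ofReal
    (mul_nonneg (Real.exp_pos _).le (pow_nonneg hbase n)) hfinal


-- F1 : e^{-x} ≤ 1 - x + x²/2 for x ≥ 0
lemma aux_exp_neg_le (x : ℝ) (hx : 0 ≤ x) : Real.exp (-x) ≤ 1 - x + x ^ 2 / 2 := by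
  have hd : ∀ y : ℝ, HasDerivAt (fun z => 1 - z + z ^ 2 / 2 - Real.exp (-z))
      (-1 + y + Real.exp (-y)) y := by
    intro y
    have h1 : HasDerivAt (fun z : ℝ => Real.exp (-z)) (-Real.exp (-y)) y := by
      simpa [Function.comp_def] using (Real.hasDerivAt_exp (-y)).comp y (hasDerivAt_neg y)
    have h2 : HasDerivAt (fun z : ℝ => 1 - z + z ^ 2 / 2) (-1 + y) y := by
      have h3 := ((hasDerivAt_const y (1:ℝ)).sub (hasDerivAt_id y)).add
        ((hasDerivAt_pow 2 y).div_const 2)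
      convert h3 using 1
      · rfl
      · rfl
      · rfl
      push_cast
      ring
    simpa [Pi.sub_def] using h2.sub h1
  have hmono : Monotone fun z : ℝ => 1 - z + z ^ 2 / 2 - Real.exp (-z) := by
    apply monotone_of_deriv_nonneg
    · exact fun y => (hd y).differentiableAt
    · intro y
      rw [(hd y).deriv]
      have := Real.add_one_le_exp (-y)
      linarith
  have h0 := hmono hx
  norm_num at h0
  linarith

lemma aux_one_sub_mul_exp_le (y : ℝ) : (1 - y) * Real.exp y ≤ 1 := by
  have h2 := Real.add_one_le_exp (-y)
  have h3 := Real.exp_pos y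
  have h4 := mul_le_mul_of_nonneg_right h2 h3.le
  rw [← Real.exp_add] at h4
  simp at h4
  linarith

-- F3 : (6 - 2x) e^x ≤ 6 + 4x + x² for x ≥ 0
lemma aux_exp_cubic (x : ℝ) (hx : 0 ≤ x) : (6 - 2 * x) * Real.exp x ≤ 6 + 4 * x + x ^ 2 := by
  have hg'd : ∀ y : ℝ, HasDerivAt (fun z => 4 + 2 * z - (4 - 2 * z) * Real.exp z)
      (2 - (2 - 2 * y) * Real.exp y) y := by
    intro y
    have h1 := (((hasDerivAt_const y (4:ℝ)).sub ((hasDerivAt_id y).const_mul 2)).mul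
      (Real.hasDerivAt_exp y))
    simp only [id_eq] at h1
    have h2 : HasDerivAt (fun z : ℝ => 4 + 2 * z) (2 : ℝ) y := by
      simpa [Pi.add_def] using (hasDerivAt_const y (4:ℝ)).add ((hasDerivAt_id y).const_mul 2)
    convert h2.sub h1 using 1
    · rfl
    · rfl
    · rfl
    simp only [Pi.sub_apply]
    ring
  have hg'nonneg : ∀ y : ℝ, 0 ≤ y → 0 ≤ 4 + 2 * y - (4 - 2 * y) * Real.exp y := by
    have hmono : Monotone fun z : ℝ => 4 + 2 * z - (4 - 2 * z) * Real.exp z := by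
      apply monotone_of_deriv_nonneg (fun y => (hg'd y).differentiableAt)
      intro y
      rw [(hg'd y).deriv]
      have h1 := aux_one_sub_mul_exp_le y
      nlinarith [Real.exp_pos y]
    intro y hy
    have h0 := hmono hy
    norm_num at h0
    linarith
  have hgd : ∀ y : ℝ, HasDerivAt (fun z => 6 + 4 * z + z ^ 2 - (6 - 2 * z) * Real.exp z)
      (4 + 2 * y - (4 - 2 * y) * Real.exp y) y := by
    intro y
    have h1 := (((hasDerivAt_const y (6:ℝ)).sub ((hasDerivAt_id y).const_mul 2)).mul
      (Real.hasDerivAt_exp y))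
    simp only [id_eq] at h1
    have h2 : HasDerivAt (fun z : ℝ => 6 + 4 * z + z ^ 2) (4 + 2 * y) y := by
      have h3 := ((hasDerivAt_const y (6:ℝ)).add ((hasDerivAt_id y).const_mul 4)).add
        (hasDerivAt_pow 2 y)
      convert h3 using 1
      · rfl
      · rfl
      · rfl
      push_cast
      ring
    convert h2.sub h1 using 1
    · rfl
    · rfl
    · rfl
    simp only [Pi.sub_apply]
    ring
  have hmono : MonotoneOn (fun z : ℝ => 6 + 4 * z + z ^ 2 - (6 - 2 * z) * Real.exp z)
      (Set.Ici 0) := by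
    apply monotoneOn_of_deriv_nonneg (convex_Ici 0)
      (Continuous.continuousOn (by continuity))
    · intro y hy
      exact (hgd y).differentiableAt.differentiableWithinAt
    · intro y hy
      rw [(hgd y).deriv]
      rw [interior_Ici] at hy
      exact hg'nonneg y (le_of_lt hy)
  have h0 := hmono (Set.self_mem_Ici) (Set.mem_Ici.2 hx) hx
  norm_num at h0
  linarith


-- Hoeffding's lemma for a Bernoulli(p) variable
lemma aux_hoeffding (p : ℝ) (hp0 : 0 ≤ p) (hp1 : p ≤ 1) (t : ℝ) (ht : 0 ≤ t) :
    1 - p + p * Real.exp t ≤ Real.exp (t * p + t ^ 2 / 8) := by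
  have hD : ∀ y : ℝ, 0 < 1 - p + p * Real.exp y := by
    intro y
    rcases lt_or_ge (Real.exp y) 1 with h | h
    · nlinarith [Real.exp_pos y]
    · nlinarith
  -- f y = y*p + y^2/8 - log (1 - p + p * exp y)
  set f : ℝ → ℝ := fun y => y * p + y ^ 2 / 8 - Real.log (1 - p + p * Real.exp y) with hf
  -- f' y = p + y/4 - p * exp y / D y
  set f' : ℝ → ℝ := fun y => p + y / 4 - p * Real.exp y / (1 - p + p * Real.exp y) with hf'
  have hdf : ∀ y : ℝ, HasDerivAt f (f' y) y := by
    intro y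
    have hD' : HasDerivAt (fun z : ℝ => 1 - p + p * Real.exp z) (p * Real.exp y) y := by
      simpa [Pi.add_def] using (hasDerivAt_const y (1 - p)).add ((Real.hasDerivAt_exp y).const_mul p)
    have hlog : HasDerivAt (fun z : ℝ => Real.log (1 - p + p * Real.exp z))
        (p * Real.exp y / (1 - p + p * Real.exp y)) y := hD'.log (hD y).ne'
    have hpoly : HasDerivAt (fun z : ℝ => z * p + z ^ 2 / 8) (p + y / 4) y := by
      have h3 := ((hasDerivAt_id y).mul_const p).add ((hasDerivAt_pow 2 y).div_const 8)
      convert h3 using 1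
      · rfl
      · rfl
      · rfl
      push_cast
      ring
    exact hpoly.sub hlog
  have hdf' : ∀ y : ℝ, HasDerivAt f'
      (1 / 4 - p * Real.exp y * (1 - p) / (1 - p + p * Real.exp y) ^ 2) y := by
    intro y
    have hD' : HasDerivAt (fun z : ℝ => 1 - p + p * Real.exp z) (p * Real.exp y) y := by
      simpa [Pi.add_def] using (hasDerivAt_const y (1 - p)).add ((Real.hasDerivAt_exp y).const_mul p)
    have hnum : HasDerivAt (fun z : ℝ => p * Real.exp z) (p * Real.exp y) y :=
      (Real.hasDerivAt_exp y).const_mul p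
    have hquot := hnum.div hD' (hD y).ne'
    have hlin : HasDerivAt (fun z : ℝ => p + z / 4) (1 / 4) y := by
      simpa [Pi.add_def] using (hasDerivAt_const y p).add ((hasDerivAt_id y).div_const 4)
    have := hlin.sub hquot
    convert this using 1
    · rfl
    · rfl
    · rfl
    field_simp
    ring
  have hf'nonneg : ∀ y : ℝ, 0 ≤ y → 0 ≤ f' y := by
    have hmono : Monotone f' := by
      apply monotone_of_deriv_nonneg (fun y => (hdf' y).differentiableAt)
      intro y
      rw [(hdf' y).deriv]
      have hDy := hD y
      have key : 4 * (p * Real.exp y * (1 - p)) ≤ (1 - p + p * Real.exp y) ^ 2 := by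
        nlinarith [sq_nonneg (1 - p - p * Real.exp y)]
      have h4 : p * Real.exp y * (1 - p) / (1 - p + p * Real.exp y) ^ 2 ≤ 1 / 4 := by
        rw [div_le_div_iff₀ (by positivity) (by norm_num)]
        linarith
      linarith
    intro y hy
    have h0 := hmono hy
    have hf'0 : f' 0 = 0 := by
      simp only [hf']
      norm_num
    linarith
  have hfmono : MonotoneOn f (Set.Ici 0) := by
    apply monotoneOn_of_deriv_nonneg (convex_Ici 0)
    · exact fun y _ => ((hdf y).continuousAt).continuousWithinAt
    · intro y hy
      exact (hdf y).differentiableAt.differentiableWithinAt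
    · intro y hy
      rw [(hdf y).deriv]
      rw [interior_Ici] at hy
      exact hf'nonneg y hy.le
  have h0 := hfmono Set.self_mem_Ici (Set.mem_Ici.2 ht) ht
  have hf0 : f 0 = 0 := by
    simp only [hf]
    norm_num
  have hlog_le : Real.log (1 - p + p * Real.exp t) ≤ t * p + t ^ 2 / 8 := by
    have : f 0 ≤ f t := h0
    rw [hf0] at this
    simp only [hf] at this
    linarith
  calc 1 - p + p * Real.exp t = Real.exp (Real.log (1 - p + p * Real.exp t)) :=
        (Real.exp_log (hD t)).symm
    _ ≤ Real.exp (t * p + t ^ 2 / 8) := Real.exp_le_exp.2 hlog_le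


lemma aux_combine (μ : Measure ℝ) [IsProbabilityMeasure μ] (n : ℕ) (q ξ t s target : ℝ)
    (hq0 : 0 < q) (hq1 : q < 1) (ht : 0 ≤ t)
    (hmgf : 1 - distFun μ ξ + distFun μ ξ * Real.exp t ≤ Real.exp s)
    (hsc : (n : ℝ) * (s - t * q) ≤ target) :
    ((Measure.pi fun _ : Fin n => μ) {ω | empQuantile ω q < ξ}).toReal ≤ Real.exp target := by
  refine (aux_chernoff μ n q ξ t hq0 hq1 ht).trans ?_
  have hp0 : 0 ≤ distFun μ ξ := distFun_nonneg μ ξ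
  have hbase : (0:ℝ) ≤ 1 - distFun μ ξ + distFun μ ξ * Real.exp t := by
    nlinarith [Real.one_le_exp ht, distFun_le_one μ ξ]
  calc Real.exp (-(t * n * q)) * (1 - distFun μ ξ + distFun μ ξ * Real.exp t) ^ n
      ≤ Real.exp (-(t * n * q)) * Real.exp s ^ n :=
        mul_le_mul_of_nonneg_left (pow_le_pow_left₀ hbase hmgf n) (Real.exp_pos _).le
    _ = Real.exp (-(t * n * q) + n * s) := by
        rw [← Real.exp_nat_mul, ← Real.exp_add]
    _ ≤ Real.exp target := by
        apply Real.exp_le_exp.2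
        have heq : -(t * (n:ℝ) * q) + (n:ℝ) * s = (n:ℝ) * (s - t * q) := by ring
        rw [heq]
        exact hsc

theorem stmt12 (μ : Measure ℝ) [IsProbabilityMeasure μ]
    (n : ℕ) (q : ℝ) (hq0 : 0 < q) (hq1 : q < 1)
    (ξ : ℝ) (hξ : ξ < quantile μ q)
    (δ₂ : ℝ) (hδ₂ : δ₂ = q - distFun μ ξ) :
    ((Measure.pi fun _ : Fin n => μ) {ω | empQuantile ω q < ξ}).toReal ≤
        Real.exp (-2 * n * δ₂ ^ 2) ∧
    ((Measure.pi fun _ : Fin n => μ) {ω | empQuantile ω q < ξ}).toReal ≤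
        Real.exp (-(n * δ₂ ^ 2) / (2 * distFun μ ξ + 2 / 3 * δ₂)) ∧
    ((Measure.pi fun _ : Fin n => μ) {ω | empQuantile ω q < ξ}).toReal ≤
        Real.exp (-(n * δ₂ ^ 2) / (2 * (1 - distFun μ ξ))) := by
  have hp0 : 0 ≤ distFun μ ξ := distFun_nonneg μ ξ
  have hp1 : distFun μ ξ ≤ 1 := distFun_le_one μ ξ
  have hpq : distFun μ ξ < q := distFun_lt_of_lt_quantile μ hq0 hξ
  have hδ : 0 < δ₂ := by rw [hδ₂]; linarith
  have hpδ : distFun μ ξ = q - δ₂ := by rw [hδ₂]; ring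
  refine ⟨?_, ?_, ?_⟩
  · -- Hoeffding bound
    apply aux_combine μ n q ξ (4 * δ₂) (4 * δ₂ * distFun μ ξ + (4 * δ₂) ^ 2 / 8) _
      hq0 hq1 (by linarith)
    · exact aux_hoeffding (distFun μ ξ) hp0 hp1 (4 * δ₂) (by linarith)
    · apply le_of_eq
      rw [hpδ]
      ring
  · -- Bernstein bound
    rcases eq_or_lt_of_le hp0 with hp0eq | hp0lt
    · -- p = 0
      have hδq : δ₂ = q := by rw [hδ₂, ← hp0eq]; ring
      apply aux_combine μ n q ξ (3/2) 0 _ hq0 hq1 (by norm_num)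
      · rw [← hp0eq]
        simp
      · apply le_of_eq
        rw [← hp0eq, hδq]
        field_simp
        ring
    · -- p > 0
      set p := distFun μ ξ with hp
      set t : ℝ := 3 * δ₂ / (3 * p + δ₂) with htdef
      have h3p : 0 < 3 * p + δ₂ := by linarith
      have ht0 : 0 ≤ t := by positivity
      have ht3 : t < 3 := by
        rw [htdef, div_lt_iff₀ h3p]
        nlinarith
      have h62 : 0 < 6 - 2 * t := by linarith
      have hEt : Real.exp t - 1 - t ≤ 3 * t ^ 2 / (6 - 2 * t) := by
        rw [le_div_iff₀ h62]
        nlinarith [aux_exp_cubic t ht0]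
      apply aux_combine μ n q ξ t (p * (t + 3 * t ^ 2 / (6 - 2 * t))) _ hq0 hq1 ht0
      · calc 1 - p + p * Real.exp t ≤ Real.exp (p * (Real.exp t - 1)) := by
              have := Real.add_one_le_exp (p * (Real.exp t - 1))
              nlinarith
          _ ≤ Real.exp (p * (t + 3 * t ^ 2 / (6 - 2 * t))) := by
              apply Real.exp_le_exp.2
              apply mul_le_mul_of_nonneg_left _ hp0
              linarith
      · apply le_of_eq
        have hqeq : q = p + δ₂ := by rw [hpδ]; ring
        have hinner : p * (t + 3 * t ^ 2 / (6 - 2 * t)) - t * q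
            = -(δ₂ ^ 2) / (2 * p + 2 / 3 * δ₂) := by
          have hd1 : (3 * p + δ₂) ≠ 0 := ne_of_gt h3p
          have hd3 : (2 * p + 2 / 3 * δ₂) ≠ 0 := by positivity
          have hpne : p ≠ 0 := ne_of_gt hp0lt
          have h62eq : 6 - 2 * (3 * δ₂ / (3 * p + δ₂)) = 18 * p / (3 * p + δ₂) := by
            field_simp
            ring
          rw [htdef, hqeq, h62eq]
          field_simp
          ring
        rw [hinner]
        ring
  · -- sub-Gaussian (1-p) bound
    set p := distFun μ ξ with hp
    have h1p : 0 < 1 - p := by linarith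
    set t : ℝ := δ₂ / (1 - p) with htdef
    have ht0 : 0 ≤ t := by positivity
    have hee : Real.exp t * Real.exp (-t) = 1 := by
      rw [← Real.exp_add]; simp
    apply aux_combine μ n q ξ t (t + (1 - p) * (t ^ 2 / 2 - t)) _ hq0 hq1 ht0
    · have hfac : 1 - p + p * Real.exp t
          = Real.exp t * (1 + (1 - p) * (Real.exp (-t) - 1)) := by
        linear_combination (p - 1) * hee
      calc 1 - p + p * Real.exp t
          = Real.exp t * (1 + (1 - p) * (Real.exp (-t) - 1)) := hfac
        _ ≤ Real.exp t * Real.exp ((1 - p) * (Real.exp (-t) - 1)) := by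
            apply mul_le_mul_of_nonneg_left _ (Real.exp_pos t).le
            linarith [Real.add_one_le_exp ((1 - p) * (Real.exp (-t) - 1))]
        _ ≤ Real.exp t * Real.exp ((1 - p) * (t ^ 2 / 2 - t)) := by
            apply mul_le_mul_of_nonneg_left _ (Real.exp_pos t).le
            apply Real.exp_le_exp.2
            apply mul_le_mul_of_nonneg_left _ h1p.le
            linarith [aux_exp_neg_le t ht0]
        _ = Real.exp (t + (1 - p) * (t ^ 2 / 2 - t)) := (Real.exp_add _ _).symm
    · apply le_of_eq
      have hqeq : q = p + δ₂ := by rw [hpδ]; ring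
      have hinner : (t + (1 - p) * (t ^ 2 / 2 - t)) - t * q
          = -(δ₂ ^ 2) / (2 * (1 - p)) := by
        rw [htdef, hqeq]
        have hd1 : (1 - p) ≠ 0 := ne_of_gt h1p
        field_simp
        ring
      rw [hinner]
      ring
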